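/- Let A : X → Y and B, C : Y → X satisfy A(BA)² = ABACA = ACABA = (AC)²A. Then for all n ∈ ℕ, dim R((AC−I)^n)/R((AC−I)^{n+1}) = dim R((BA−I)^n)/R((BA−I)^{n+1}) (i.e. c_n(AC−I) = c_n(BA−I)). -/

import Mathlib

open Polynomial ContinuousLinearMap

universe u

lemma aux {M N : Type u} [AddCommGroup M] [Module ℂ M] [AddCommGroup N] [Module ℂ N]
    (a : Module.End ℂ M) (b : Module.End ℂ N) (w : M →ₗ[ℂ] N) (v : N →ₗ[ℂ] M)
    (hw : ∀ x, w (a x) = b (w x)) (hv : ∀ y, v (b y) = a (v y))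
    (s : Module.End ℂ M) (hs : a * s = s * a) (hvw : ∀ x, v (w x) = x + a (s x))
    (t : Module.End ℂ N) (ht : b * t = t * b) (hwv : ∀ y, w (v y) = y + b (t y)) (n : ℕ) :
    Module.rank ℂ (LinearMap.range (a ^ n) ⧸
        (LinearMap.range (a ^ (n + 1))).comap (LinearMap.range (a ^ n)).subtype) =
      Module.rank ℂ (LinearMap.range (b ^ n) ⧸
        (LinearMap.range (b ^ (n + 1))).comap (LinearMap.range (b ^ n)).subtype) := by
  have hwp : ∀ (k : ℕ) (x : M), w ((a ^ k) x) = (b ^ k) (w x) := by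
    intro k
    induction k with
    | zero => simp
    | succ k ih =>
      intro x
      rw [pow_succ', pow_succ']
      simp only [Module.End.mul_apply]
      rw [hw, ih]
  have hvp : ∀ (k : ℕ) (y : N), v ((b ^ k) y) = (a ^ k) (v y) := by
    intro k
    induction k with
    | zero => simp
    | succ k ih =>
      intro y
      rw [pow_succ', pow_succ']
      simp only [Module.End.mul_apply]
      rw [hv, ih]
  have hsp : ∀ (k : ℕ) (x : M), s ((a ^ k) x) = (a ^ k) (s x) := by
    intro k x
    have : s * a ^ k = a ^ k * s := (Commute.pow_right hs.symm k).eq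
    calc s ((a ^ k) x) = (s * a ^ k) x := rfl
      _ = (a ^ k * s) x := by rw [this]
      _ = (a ^ k) (s x) := rfl
  have htp : ∀ (k : ℕ) (y : N), t ((b ^ k) y) = (b ^ k) (t y) := by
    intro k y
    have : t * b ^ k = b ^ k * t := (Commute.pow_right ht.symm k).eq
    calc t ((b ^ k) y) = (t * b ^ k) y := rfl
      _ = (b ^ k * t) y := by rw [this]
      _ = (b ^ k) (t y) := rfl
  have hwmem : ∀ (k : ℕ) (x : M), x ∈ LinearMap.range (a ^ k) → w x ∈ LinearMap.range (b ^ k) := by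
    rintro k x ⟨z, rfl⟩
    exact ⟨w z, (hwp k z).symm⟩
  have hvmem : ∀ (k : ℕ) (y : N), y ∈ LinearMap.range (b ^ k) → v y ∈ LinearMap.range (a ^ k) := by
    rintro k y ⟨z, rfl⟩
    exact ⟨v z, (hvp k z).symm⟩
  set pa := (LinearMap.range (a ^ (n + 1))).comap (LinearMap.range (a ^ n)).subtype with hpa
  set pb := (LinearMap.range (b ^ (n + 1))).comap (LinearMap.range (b ^ n)).subtype with hpb
  let f0 : LinearMap.range (a ^ n) →ₗ[ℂ] LinearMap.range (b ^ n) :=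
    (w.comp (LinearMap.range (a ^ n)).subtype).codRestrict _
      (fun x => hwmem n x.1 x.2)
  let g0 : LinearMap.range (b ^ n) →ₗ[ℂ] LinearMap.range (a ^ n) :=
    (v.comp (LinearMap.range (b ^ n)).subtype).codRestrict _
      (fun y => hvmem n y.1 y.2)
  have hf0 : pa ≤ LinearMap.ker (pb.mkQ.comp f0) := by
    rintro ⟨x, hx⟩ hmem
    simp only [LinearMap.mem_ker, LinearMap.comp_apply, Submodule.mkQ_apply,
      Submodule.Quotient.mk_eq_zero]
    have : x ∈ LinearMap.range (a ^ (n + 1)) := hmem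
    simp only [pb, Submodule.mem_comap]
    exact hwmem (n + 1) x this
  have hg0 : pb ≤ LinearMap.ker (pa.mkQ.comp g0) := by
    rintro ⟨y, hy⟩ hmem
    simp only [LinearMap.mem_ker, LinearMap.comp_apply, Submodule.mkQ_apply,
      Submodule.Quotient.mk_eq_zero]
    have : y ∈ LinearMap.range (b ^ (n + 1)) := hmem
    simp only [pa, Submodule.mem_comap]
    exact hvmem (n + 1) y this
  let f := pa.liftQ (pb.mkQ.comp f0) hf0
  let g := pb.liftQ (pa.mkQ.comp g0) hg0
  have hgf : g.comp f = LinearMap.id := by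
    apply Submodule.linearMap_qext
    apply LinearMap.ext
    rintro ⟨x, hx⟩
    obtain ⟨z, rfl⟩ := hx
    simp only [LinearMap.comp_apply, Submodule.mkQ_apply, LinearMap.id_apply, f, g,
      Submodule.liftQ_apply, LinearMap.codRestrict_apply, Submodule.coe_subtype, f0, g0]
    rw [Submodule.Quotient.eq]
    simp only [pa, Submodule.mem_comap, Submodule.coe_subtype, AddSubgroupClass.coe_sub,
      LinearMap.codRestrict_apply, LinearMap.comp_apply]
    refine ⟨s z, ?_⟩
    have : v (w ((a ^ n) z)) - (a ^ n) z = a (s ((a ^ n) z)) := by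
      rw [hvw]; abel
    change (a ^ (n + 1)) (s z) = v (w ((a ^ n) z)) - (a ^ n) z
    rw [this, hsp n z, pow_succ']
    rfl
  have hfg : f.comp g = LinearMap.id := by
    apply Submodule.linearMap_qext
    apply LinearMap.ext
    rintro ⟨y, hy⟩
    obtain ⟨z, rfl⟩ := hy
    simp only [LinearMap.comp_apply, Submodule.mkQ_apply, LinearMap.id_apply, f, g,
      Submodule.liftQ_apply, LinearMap.codRestrict_apply, Submodule.coe_subtype, f0, g0]
    rw [Submodule.Quotient.eq]
    simp only [pb, Submodule.mem_comap, Submodule.coe_subtype, AddSubgroupClass.coe_sub,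
      LinearMap.codRestrict_apply, LinearMap.comp_apply]
    refine ⟨t z, ?_⟩
    have : w (v ((b ^ n) z)) - (b ^ n) z = b (t ((b ^ n) z)) := by
      rw [hwv]; abel
    change (b ^ (n + 1)) (t z) = w (v ((b ^ n) z)) - (b ^ n) z
    rw [this, htp n z, pow_succ']
    rfl
  exact (LinearEquiv.ofLinear f g hfg hgf).rank_eq


lemma coe_pow_apply {Z : Type u} [NormedAddCommGroup Z] [NormedSpace ℂ Z]
    (g : Z →L[ℂ] Z) (k : ℕ) (y : Z) : (g ^ k) y = ((g : Z →ₗ[ℂ] Z) ^ k) y := by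
  induction k generalizing y with
  | zero => simp
  | succ k ih =>
    rw [pow_succ, pow_succ, ContinuousLinearMap.mul_apply, Module.End.mul_apply]
    simp only [ContinuousLinearMap.coe_coe]
    exact ih (g y)

lemma range_pow_coe {Z : Type u} [NormedAddCommGroup Z] [NormedSpace ℂ Z]
    (g : Z →L[ℂ] Z) (k : ℕ) :
    LinearMap.range ((g ^ k : Z →L[ℂ] Z) : Z →ₗ[ℂ] Z) = LinearMap.range ((g : Z →ₗ[ℂ] Z) ^ k) := by
  ext x
  simp only [LinearMap.mem_range]
  exact exists_congr fun y => by rw [ContinuousLinearMap.coe_coe, coe_pow_apply]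

variable {X Y : Type u} [NormedAddCommGroup X] [NormedSpace ℂ X] [CompleteSpace X]
  [NormedAddCommGroup Y] [NormedSpace ℂ Y] [CompleteSpace Y]
theorem stmt5 (A : X →L[ℂ] Y) (B C : Y →L[ℂ] X)
    (h1 : A ∘L B ∘L A ∘L B ∘L A = A ∘L B ∘L A ∘L C ∘L A)
    (h2 : A ∘L B ∘L A ∘L C ∘L A = A ∘L C ∘L A ∘L B ∘L A)
    (h3 : A ∘L C ∘L A ∘L B ∘L A = A ∘L C ∘L A ∘L C ∘L A) (n : ℕ) :
    Module.rank ℂ (LinearMap.range (((A ∘L C - 1) ^ n : Y →L[ℂ] Y) : Y →ₗ[ℂ] Y) ⧸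
        (LinearMap.range (((A ∘L C - 1) ^ (n + 1) : Y →L[ℂ] Y) : Y →ₗ[ℂ] Y)).comap
          (LinearMap.range (((A ∘L C - 1) ^ n : Y →L[ℂ] Y) : Y →ₗ[ℂ] Y)).subtype) =
      Module.rank ℂ (LinearMap.range (((B ∘L A - 1) ^ n : X →L[ℂ] X) : X →ₗ[ℂ] X) ⧸
        (LinearMap.range (((B ∘L A - 1) ^ (n + 1) : X →L[ℂ] X) : X →ₗ[ℂ] X)).comap
          (LinearMap.range (((B ∘L A - 1) ^ n : X →L[ℂ] X) : X →ₗ[ℂ] X)).subtype) := by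
  -- pointwise versions of the hypotheses
  have p1 : ∀ x : X, A (B (A (B (A x)))) = A (B (A (C (A x)))) := fun x => by
    have := DFunLike.congr_fun h1 x
    simpa only [ContinuousLinearMap.comp_apply] using this
  have p2 : ∀ x : X, A (B (A (C (A x)))) = A (C (A (B (A x)))) := fun x => by
    have := DFunLike.congr_fun h2 x
    simpa only [ContinuousLinearMap.comp_apply] using this
  have p3 : ∀ x : X, A (C (A (B (A x)))) = A (C (A (C (A x)))) := fun x => by
    have := DFunLike.congr_fun h3 x
    simpa only [ContinuousLinearMap.comp_apply] using this
  have q1 : ∀ x : X, A (B (A (B (A x)))) = A (C (A (C (A x)))) := fun x =>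
    (p1 x).trans ((p2 x).trans (p3 x))
  have q2 : ∀ x : X, A (B (A (C (A x)))) = A (C (A (C (A x)))) := fun x =>
    (p2 x).trans (p3 x)
  have q4 : ∀ x : X, A (B (A (B (A x)))) = A (C (A (B (A x)))) := fun x =>
    (p1 x).trans (p2 x)
  -- the intertwining operators
  set a : Module.End ℂ Y := ((A ∘L C - 1 : Y →L[ℂ] Y) : Y →ₗ[ℂ] Y) with ha
  set b : Module.End ℂ X := ((B ∘L A - 1 : X →L[ℂ] X) : X →ₗ[ℂ] X) with hb
  set u : Module.End ℂ Y := ((A ∘L C : Y →L[ℂ] Y) : Y →ₗ[ℂ] Y) with hu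
  set uu : Module.End ℂ X := ((B ∘L A : X →L[ℂ] X) : X →ₗ[ℂ] X) with huu
  set w : Y →ₗ[ℂ] X :=
    ((B ∘L (A ∘L (C ∘L (A ∘L C))) : Y →L[ℂ] X) : Y →ₗ[ℂ] X) with hwdef
  set v : X →ₗ[ℂ] Y :=
    ((A ∘L (B ∘L (A ∘L (B ∘L A))) : X →L[ℂ] Y) : X →ₗ[ℂ] Y) with hvdef
  have hau : a = u - 1 := by
    ext y; simp [ha, hu]
  have hbu : b = uu - 1 := by
    ext x; simp [hb, huu]
  have hua : ∀ y : Y, u y = A (C y) := fun y => by simp [hu]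
  have hub : ∀ x : X, uu x = B (A x) := fun x => by simp [huu]
  have hwap : ∀ y : Y, w y = B (A (C (A (C y)))) := fun y => by simp [hwdef]
  have hvap : ∀ x : X, v x = A (B (A (B (A x)))) := fun x => by simp [hvdef]
  have haap : ∀ y : Y, a y = A (C y) - y := fun y => by simp [ha]
  have hbap : ∀ x : X, b x = B (A x) - x := fun x => by simp [hb]
  -- intertwining identities
  have hw : ∀ y : Y, w (a y) = b (w y) := by
    intro y
    simp only [haap, hbap, map_sub, hwap]
    rw [q2 (C y)]
  have hv : ∀ x : X, v (b x) = a (v x) := by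
    intro x
    simp only [hbap, haap, map_sub, hvap]
    rw [q4 (B (A x))]
  -- polynomial witnesses
  set s : Module.End ℂ Y := u ^ 4 + u ^ 3 + u ^ 2 + u + 1 with hsdef
  set t : Module.End ℂ X := uu ^ 4 + uu ^ 3 + uu ^ 2 + uu + 1 with htdef
  have hs : a * s = s * a := by
    rw [hau, hsdef]; noncomm_ring
  have ht : b * t = t * b := by
    rw [hbu, htdef]; noncomm_ring
  have hring1 : 1 + a * s = u ^ 5 := by
    rw [hau, hsdef]; noncomm_ring
  have hring2 : 1 + b * t = uu ^ 5 := by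
    rw [hbu, htdef]; noncomm_ring
  have hu5 : ∀ y : Y, (u ^ 5) y = A (C (A (C (A (C (A (C (A (C y))))))))) := by
    intro y
    have : u ^ 5 = u * (u * (u * (u * u))) := by noncomm_ring
    rw [this]
    simp only [Module.End.mul_apply, hua]
  have huu5 : ∀ x : X, (uu ^ 5) x = B (A (B (A (B (A (B (A (B (A x))))))))) := by
    intro x
    have : uu ^ 5 = uu * (uu * (uu * (uu * uu))) := by noncomm_ring
    rw [this]
    simp only [Module.End.mul_apply, hub]
  have hvw : ∀ y : Y, v (w y) = y + a (s y) := by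
    intro y
    have e1 : v (w y) = A (C (A (C (A (C (A (C (A (C y))))))))) := by
      rw [hwap, hvap, q1 (B (A (C (A (C y))))), q2 (C y)]
    have e2 : y + a (s y) = (u ^ 5) y := by
      calc y + a (s y) = ((1 : Module.End ℂ Y) + a * s) y := by
            simp [LinearMap.add_apply, Module.End.mul_apply]
        _ = (u ^ 5) y := by rw [hring1]
    rw [e1, e2, hu5]
  have hwv : ∀ x : X, w (v x) = x + b (t x) := by
    intro x
    have e1 : w (v x) = B (A (B (A (B (A (B (A (B (A x))))))))) := by
      rw [hvap, hwap, ← q1 (B (A (B (A x))))]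
    have e2 : x + b (t x) = (uu ^ 5) x := by
      calc x + b (t x) = ((1 : Module.End ℂ X) + b * t) x := by
            simp [LinearMap.add_apply, Module.End.mul_apply]
        _ = (uu ^ 5) x := by rw [hring2]
    rw [e1, e2, huu5]
  rw [range_pow_coe (A ∘L C - 1) n, range_pow_coe (A ∘L C - 1) (n + 1),
    range_pow_coe (B ∘L A - 1) n, range_pow_coe (B ∘L A - 1) (n + 1)]
  exact aux a b w v hw hv s hs hvw t ht hwv n
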